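/- Let {A_n} be a sequence of n×n symmetric matrices with nonnegative entries and zeros on the diagonal satisfying (BD) and (NT), fix (β, B) ∈ Θ, and let X be an observation from P_{n,β,B}. Then limsup_{n→∞} (1/n) E[ ( Σ_{i=1}^n ( m_i(X) − Σ_{j=1}^n A_n(i,j) tanh(β m_j(X) + B) ) )² ] < ∞, where E denotes expectation under P_{n,β,B}. -/

import Mathlib

open Filter

noncomputable section

/-- Spin configuration in `{-1,1}^n` encoded by a Boolean vector. -/
def spinVec (n : ℕ) (σ : Fin n → Bool) : Fin n → ℝ := fun i => if σ i then 1 else -1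

/-- Local field `m_i(x) = ∑_j A i j * x j`. -/
def mloc {n : ℕ} (A : Matrix (Fin n) (Fin n) ℝ) (x : Fin n → ℝ) (i : Fin n) : ℝ :=
  ∑ j, A i j * x j

/-- Average local field `m̄(x)`. -/
def mbar {n : ℕ} (A : Matrix (Fin n) (Fin n) ℝ) (x : Fin n → ℝ) : ℝ :=
  (1 / (n : ℝ)) * ∑ i, mloc A x i

/-- `T_n(x) = (1/n) ∑_i (m_i(x) - m̄(x))²`. -/
def Tstat {n : ℕ} (A : Matrix (Fin n) (Fin n) ℝ) (x : Fin n → ℝ) : ℝ :=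
  (1 / (n : ℝ)) * ∑ i, (mloc A x i - mbar A x) ^ 2

/-- Unnormalized Ising weight `exp((β/2) xᵀAx + B ∑ x_i)`. -/
def isingWt {n : ℕ} (A : Matrix (Fin n) (Fin n) ℝ) (β B : ℝ) (x : Fin n → ℝ) : ℝ :=
  Real.exp (β / 2 * ∑ i, ∑ j, A i j * x i * x j + B * ∑ i, x i)

/-- Probability of the event `E` under the Ising measure `P_{n,β,B}`. -/
def isingProb {n : ℕ} (A : Matrix (Fin n) (Fin n) ℝ) (β B : ℝ) (E : Set (Fin n → ℝ)) : ℝ :=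
  (∑ σ : Fin n → Bool, E.indicator (isingWt A β B) (spinVec n σ)) /
    (∑ σ : Fin n → Bool, isingWt A β B (spinVec n σ))

/-- Expectation of `f` under the Ising measure `P_{n,β,B}`. -/
def isingExp {n : ℕ} (A : Matrix (Fin n) (Fin n) ℝ) (β B : ℝ) (f : (Fin n → ℝ) → ℝ) : ℝ :=
  (∑ σ : Fin n → Bool, f (spinVec n σ) * isingWt A β B (spinVec n σ)) /
    (∑ σ : Fin n → Bool, isingWt A β B (spinVec n σ))

/-- Pseudo-likelihood equation `Q_n(β,B|x)`. -/
def Qfun {n : ℕ} (A : Matrix (Fin n) (Fin n) ℝ) (β B : ℝ) (x : Fin n → ℝ) : ℝ :=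
  ∑ i, mloc A x i * (x i - Real.tanh (β * mloc A x i + B))

/-- Pseudo-likelihood equation `R_n(β,B|x)`. -/
def Rfun {n : ℕ} (A : Matrix (Fin n) (Fin n) ℝ) (β B : ℝ) (x : Fin n → ℝ) : ℝ :=
  ∑ i, (x i - Real.tanh (β * mloc A x i + B))

/-- `b_i(x) = tanh(β m_i(x) + B)`. -/
def bvec {n : ℕ} (A : Matrix (Fin n) (Fin n) ℝ) (β B : ℝ) (x : Fin n → ℝ) : Fin n → ℝ :=
  fun i => Real.tanh (β * mloc A x i + B)

/-- `f_n(y) = (β/2) yᵀAy + B ∑ y_i`. -/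
def fN {n : ℕ} (A : Matrix (Fin n) (Fin n) ℝ) (β B : ℝ) (y : Fin n → ℝ) : ℝ :=
  β / 2 * ∑ i, ∑ j, A i j * y i * y j + B * ∑ i, y i

/-- Entropy term `I(y)` (with `0 log 0 = 0`, as `Real.log 0 = 0`). -/
def entI {n : ℕ} (y : Fin n → ℝ) : ℝ :=
  ∑ i, ((1 + y i) / 2 * Real.log ((1 + y i) / 2) + (1 - y i) / 2 * Real.log ((1 - y i) / 2))


lemma tanh_hasDerivAt (t : ℝ) : HasDerivAt Real.tanh (1 / Real.cosh t ^ 2) t := by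
  have h := (Real.hasDerivAt_sinh t).div (Real.hasDerivAt_cosh t) (ne_of_gt (Real.cosh_pos (x := t)))
  have heq : Real.tanh = fun x => Real.sinh x / Real.cosh x := by
    funext x; exact Real.tanh_eq_sinh_div_cosh x
  rw [heq]
  convert h using 1
  have := Real.cosh_sq_sub_sinh_sq t
  · rfl
  · rfl
  · rfl
  · rw [div_left_inj' (pow_ne_zero 2 (Real.cosh_pos (x := t)).ne')]
    nlinarith [Real.cosh_pos (x := t), Real.cosh_sq_sub_sinh_sq t]

lemma tanh_lipschitz (a b : ℝ) : |Real.tanh a - Real.tanh b| ≤ |a - b| := by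
  have : LipschitzWith 1 Real.tanh := by
    apply lipschitzWith_of_nnnorm_deriv_le
    · exact fun x => (tanh_hasDerivAt x).differentiableAt
    · intro x
      rw [(tanh_hasDerivAt x).deriv]
      rw [← NNReal.coe_le_coe]
      simp only [coe_nnnorm, NNReal.coe_one, Real.norm_eq_abs]
      rw [abs_of_pos (by positivity)]
      rw [div_le_one (by positivity)]
      nlinarith [Real.one_le_cosh x]
  simpa [Real.dist_eq] using this.dist_le_mul a b

lemma isingWt_pos {n : ℕ} (A : Matrix (Fin n) (Fin n) ℝ) (β B : ℝ) (x : Fin n → ℝ) :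
    0 < isingWt A β B x := Real.exp_pos _

section core
variable {n : ℕ} (A : Matrix (Fin n) (Fin n) ℝ) (β B : ℝ)

lemma spin_flip (σ : Fin n → Bool) (j : Fin n) :
    spinVec n (Function.update σ j (!σ j)) =
      Function.update (spinVec n σ) j (-(spinVec n σ j)) := by
  funext i
  by_cases h : i = j
  · subst h; simp [spinVec]; cases σ i <;> simp
  · simp [spinVec, Function.update_of_ne h]

lemma mloc_update (x : Fin n → ℝ) (j k : Fin n) (s : ℝ) :
    mloc A (Function.update x j s) k = mloc A x k + A k j * (s - x j) := by
  unfold mloc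
  have : ∀ l : Fin n, A k l * (Function.update x j s l) =
      A k l * x l + (if l = j then A k j * (s - x j) else 0) := by
    intro l
    by_cases h : l = j
    · subst h; simp [Function.update_self]; ring
    · simp [Function.update_of_ne h, h]
  simp only [this, Finset.sum_add_distrib, Finset.sum_ite_eq' Finset.univ j]
  simp

lemma sum_update (x : Fin n → ℝ) (j : Fin n) (s : ℝ) :
    ∑ i, Function.update x j s i = (∑ i, x i) + (s - x j) := by
  have : ∀ l : Fin n, Function.update x j s l =
      x l + (if l = j then s - x j else 0) := by
    intro l
    by_cases h : l = j
    · subst h; simp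
    · simp [Function.update_of_ne h, h]
  simp only [this, Finset.sum_add_distrib, Finset.sum_ite_eq' Finset.univ j]
  simp

lemma quad_update (hsymm : A.IsSymm) (hdiag : ∀ i, A i i = 0)
    (x : Fin n → ℝ) (j : Fin n) (s : ℝ) :
    ∑ i, ∑ k, A i k * Function.update x j s i * Function.update x j s k =
      (∑ i, ∑ k, A i k * x i * x k) + 2 * (s - x j) * mloc A x j := by
  have hAsym : ∀ i k, A i k = A k i := fun i k => (Matrix.IsSymm.apply hsymm i k).symm ▸ rfl
  set x' := Function.update x j s with hx'
  have hinner : ∀ i, ∑ k, A i k * x' i * x' k = x' i * (mloc A x i + A i j * (s - x j)) := by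
    intro i
    rw [← mloc_update]
    unfold mloc
    rw [Finset.mul_sum]
    exact Finset.sum_congr rfl fun k _ => by ring
  simp only [hinner]
  have houter : ∀ i, x' i * (mloc A x i + A i j * (s - x j)) =
      x i * mloc A x i + x i * (A i j * (s - x j)) +
      (if i = j then (s - x j) * (mloc A x j + A j j * (s - x j)) else 0) := by
    intro i
    by_cases h : i = j
    · subst h; simp [hx']; ring
    · simp [hx', Function.update_of_ne h, h]; ring
  simp only [houter, Finset.sum_add_distrib, Finset.sum_ite_eq' Finset.univ j,
    Finset.mem_univ, if_true, hdiag j]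
  have h1 : ∑ i, ∑ k, A i k * x i * x k = ∑ i, x i * mloc A x i := by
    refine Finset.sum_congr rfl fun i _ => ?_
    unfold mloc; rw [Finset.mul_sum]; exact Finset.sum_congr rfl fun k _ => by ring
  have h2 : ∑ i, x i * (A i j * (s - x j)) = (s - x j) * mloc A x j := by
    unfold mloc
    rw [Finset.mul_sum]
    refine Finset.sum_congr rfl fun i _ => ?_
    rw [← hAsym i j]; ring
  rw [h1, h2]; ring

lemma wt_flip (hsymm : A.IsSymm) (hdiag : ∀ i, A i i = 0) (x : Fin n → ℝ) (j : Fin n) :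
    isingWt A β B (Function.update x j (-(x j))) =
      isingWt A β B x * Real.exp (-(2 * x j) * (β * mloc A x j + B)) := by
  unfold isingWt
  rw [← Real.exp_add]
  congr 1
  rw [quad_update A hsymm hdiag x j (-(x j)), sum_update]
  ring

end core

section core2
variable {n : ℕ} (A : Matrix (Fin n) (Fin n) ℝ) (β B : ℝ)

lemma pair_zero (s t : ℝ) (hs : s = 1 ∨ s = -1) :
    (s - Real.tanh t) + (-s - Real.tanh t) * Real.exp (-(2*s)*t) = 0 := by
  have hu : (0:ℝ) < Real.exp t := Real.exp_pos t
  rcases hs with h | h <;> subst h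
  · have h2 : Real.exp (-(2*(1:ℝ))*t) = (Real.exp t * Real.exp t)⁻¹ := by
      rw [show -(2*(1:ℝ))*t = -(t + t) by ring, Real.exp_neg, Real.exp_add]
    rw [h2, Real.tanh_eq_sinh_div_cosh, Real.sinh_eq, Real.cosh_eq]
    simp only [Real.exp_neg]
    have hc : Real.exp t + (Real.exp t)⁻¹ > 0 := by positivity
    field_simp
    ring
  · have h2 : Real.exp (-(2*(-1:ℝ))*t) = Real.exp t * Real.exp t := by
      rw [show -(2*(-1:ℝ))*t = t + t by ring, Real.exp_add]
    rw [h2, Real.tanh_eq_sinh_div_cosh, Real.sinh_eq, Real.cosh_eq]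
    simp only [Real.exp_neg]
    have hc : Real.exp t + (Real.exp t)⁻¹ > 0 := by positivity
    field_simp
    ring

lemma spin_pm (σ : Fin n → Bool) (j : Fin n) : spinVec n σ j = 1 ∨ spinVec n σ j = -1 := by
  unfold spinVec; cases σ j <;> simp

lemma flip_involutive (j : Fin n) :
    Function.Involutive (fun σ : Fin n → Bool => Function.update σ j (!σ j)) := by
  intro σ; funext i
  by_cases h : i = j
  · subst h; simp
  · simp [Function.update_of_ne h]

lemma core_zero (hsymm : A.IsSymm) (hdiag : ∀ i, A i i = 0) (j : Fin n)
    (g : (Fin n → ℝ) → ℝ)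
    (hg : ∀ x : Fin n → ℝ, g (Function.update x j (-(x j))) = g x) :
    ∑ σ : Fin n → Bool,
      (spinVec n σ j - Real.tanh (β * mloc A (spinVec n σ) j + B)) * g (spinVec n σ) *
        isingWt A β B (spinVec n σ) = 0 := by
  set f : (Fin n → Bool) → ℝ := fun σ =>
    (spinVec n σ j - Real.tanh (β * mloc A (spinVec n σ) j + B)) * g (spinVec n σ) *
      isingWt A β B (spinVec n σ) with hf
  have hbij := (flip_involutive (n := n) j).bijective
  have hsum : ∑ σ, f (Function.update σ j (!σ j)) = ∑ σ, f σ :=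
    Function.Bijective.sum_comp hbij f
  have hzero : ∀ σ, f σ + f (Function.update σ j (!σ j)) = 0 := by
    intro σ
    set x := spinVec n σ with hx
    have hflip : spinVec n (Function.update σ j (!σ j)) = Function.update x j (-(x j)) :=
      spin_flip σ j
    have hm : mloc A (Function.update x j (-(x j))) j = mloc A x j := by
      rw [mloc_update, hdiag]; ring
    have hxj : Function.update x j (-(x j)) j = -(x j) := Function.update_self j _ x
    rw [hf]
    simp only [hflip, hm, hxj, hg x, wt_flip A β B hsymm hdiag x j]
    have key := pair_zero (x j) (β * mloc A x j + B) (spin_pm σ j)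
    rw [← hx]
    linear_combination (g x * isingWt A β B x) * key
  have : (2:ℝ) * ∑ σ, f σ = 0 := by
    have h0 : ∑ σ : Fin n → Bool, (f σ + f (Function.update σ j (!σ j))) = 0 := by
      rw [Finset.sum_eq_zero (fun σ _ => hzero σ)]
    rw [Finset.sum_add_distrib, hsum] at h0
    linarith
  linarith

end core2

section core3
variable {n : ℕ} (A : Matrix (Fin n) (Fin n) ℝ) (β B : ℝ)

lemma abs_tanh_le_one' (t : ℝ) : |Real.tanh t| ≤ 1 := by
  rw [Real.tanh_eq_sinh_div_cosh, abs_div, abs_of_pos (Real.cosh_pos (x := t)),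
    div_le_one (Real.cosh_pos (x := t))]
  rw [Real.sinh_eq, Real.cosh_eq, abs_div]
  rw [abs_of_pos (by norm_num : (0:ℝ) < 2)]
  have h1 := Real.exp_pos t
  have h2 := Real.exp_pos (-t)
  rw [div_le_div_iff_of_pos_right (by norm_num)]
  rw [abs_le]
  constructor <;> nlinarith

lemma abs_sum_wt_le (h : (Fin n → Bool) → ℝ) (c : ℝ)
    (hc : ∀ σ, |h σ| ≤ c) :
    |∑ σ : Fin n → Bool, h σ * isingWt A β B (spinVec n σ)| ≤
      c * ∑ σ : Fin n → Bool, isingWt A β B (spinVec n σ) := by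
  calc |∑ σ : Fin n → Bool, h σ * isingWt A β B (spinVec n σ)|
      ≤ ∑ σ : Fin n → Bool, |h σ * isingWt A β B (spinVec n σ)| :=
        Finset.abs_sum_le_sum_abs _ _
    _ ≤ c * ∑ σ : Fin n → Bool, isingWt A β B (spinVec n σ) := by
        rw [Finset.mul_sum]
        refine Finset.sum_le_sum fun σ _ => ?_
        rw [abs_mul, abs_of_pos (isingWt_pos A β B _)]
        exact mul_le_mul_of_nonneg_right (hc σ) (isingWt_pos A β B _).le

lemma eps_abs_le (σ : Fin n → Bool) (j : Fin n) :
    |spinVec n σ j - Real.tanh (β * mloc A (spinVec n σ) j + B)| ≤ 2 := by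
  have h1 : |spinVec n σ j| ≤ 1 := by rcases spin_pm σ j with h | h <;> rw [h] <;> norm_num
  have h2 := abs_tanh_le_one' (β * mloc A (spinVec n σ) j + B)
  calc |spinVec n σ j - Real.tanh (β * mloc A (spinVec n σ) j + B)|
      ≤ |spinVec n σ j| + |Real.tanh (β * mloc A (spinVec n σ) j + B)| := abs_sub _ _
    _ ≤ 2 := by linarith

lemma cov_bound (hsymm : A.IsSymm) (hdiag : ∀ i, A i i = 0)
    (hnonneg : ∀ i j, 0 ≤ A i j) (hβ : 0 ≤ β)
    (hlip : ∀ a b : ℝ, |Real.tanh a - Real.tanh b| ≤ |a - b|)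
    (j k : Fin n) :
    |∑ σ : Fin n → Bool,
        (spinVec n σ j - Real.tanh (β * mloc A (spinVec n σ) j + B)) *
        (spinVec n σ k - Real.tanh (β * mloc A (spinVec n σ) k + B)) *
        isingWt A β B (spinVec n σ)| ≤
      ((if j = k then (4:ℝ) else 0) + 2 * β * A k j) *
        ∑ σ : Fin n → Bool, isingWt A β B (spinVec n σ) := by
  by_cases hjk : j = k
  · subst hjk
    simp only [if_pos rfl]
    have hb := abs_sum_wt_le A β B
      (fun σ => (spinVec n σ j - Real.tanh (β * mloc A (spinVec n σ) j + B)) *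
        (spinVec n σ j - Real.tanh (β * mloc A (spinVec n σ) j + B))) 4
      (fun σ => by
        rw [abs_mul]
        calc |spinVec n σ j - Real.tanh (β * mloc A (spinVec n σ) j + B)| *
            |spinVec n σ j - Real.tanh (β * mloc A (spinVec n σ) j + B)| ≤ 2 * 2 :=
              mul_le_mul (eps_abs_le A β B σ j) (eps_abs_le A β B σ j) (abs_nonneg _)
                (by norm_num)
          _ = 4 := by norm_num)
    have hle : (4:ℝ) ≤ 4 + 2 * β * A j j := by
      have := hnonneg j j
      nlinarith
    calc |∑ σ : Fin n → Bool, _| ≤ 4 * ∑ σ : Fin n → Bool, isingWt A β B (spinVec n σ) := hb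
      _ ≤ (4 + 2 * β * A j j) * ∑ σ : Fin n → Bool, isingWt A β B (spinVec n σ) := by
          refine mul_le_mul_of_nonneg_right hle (Finset.sum_nonneg fun σ _ => (isingWt_pos A β B _).le)
  · -- off-diagonal case
    simp only [if_neg hjk]
    set g : (Fin n → ℝ) → ℝ := fun x =>
      x k - Real.tanh (β * (mloc A x k - A k j * x j) + B) with hgdef
    have hg : ∀ x : Fin n → ℝ, g (Function.update x j (-(x j))) = g x := by
      intro x
      have hk : Function.update x j (-(x j)) k = x k :=
        Function.update_of_ne (Ne.symm hjk) _ _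
      rw [hgdef]
      simp only
      rw [mloc_update, Function.update_self]
      rw [Function.update_of_ne (Ne.symm hjk)]
      ring_nf
    have hz := core_zero A β B hsymm hdiag j g hg
    have hxabs : ∀ σ : Fin n → Bool, |spinVec n σ j| = 1 := by
      intro σ; rcases spin_pm σ j with h | h <;> rw [h] <;> norm_num
    have hsum_eq : (∑ σ : Fin n → Bool,
        (spinVec n σ j - Real.tanh (β * mloc A (spinVec n σ) j + B)) *
        (spinVec n σ k - Real.tanh (β * mloc A (spinVec n σ) k + B)) *
        isingWt A β B (spinVec n σ)) =
        ∑ σ : Fin n → Bool,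
          (spinVec n σ j - Real.tanh (β * mloc A (spinVec n σ) j + B)) *
          ((spinVec n σ k - Real.tanh (β * mloc A (spinVec n σ) k + B)) - g (spinVec n σ)) *
          isingWt A β B (spinVec n σ) := by
      have : ∀ σ : Fin n → Bool,
          (spinVec n σ j - Real.tanh (β * mloc A (spinVec n σ) j + B)) *
          (spinVec n σ k - Real.tanh (β * mloc A (spinVec n σ) k + B)) *
          isingWt A β B (spinVec n σ) =
          (spinVec n σ j - Real.tanh (β * mloc A (spinVec n σ) j + B)) *
          ((spinVec n σ k - Real.tanh (β * mloc A (spinVec n σ) k + B)) - g (spinVec n σ)) *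
          isingWt A β B (spinVec n σ) +
          (spinVec n σ j - Real.tanh (β * mloc A (spinVec n σ) j + B)) * g (spinVec n σ) *
          isingWt A β B (spinVec n σ) := fun σ => by ring
      rw [Finset.sum_congr rfl (fun σ _ => this σ), Finset.sum_add_distrib, hz, add_zero]
    rw [hsum_eq]
    have hbound := abs_sum_wt_le A β B
      (fun σ => (spinVec n σ j - Real.tanh (β * mloc A (spinVec n σ) j + B)) *
        ((spinVec n σ k - Real.tanh (β * mloc A (spinVec n σ) k + B)) - g (spinVec n σ)))
      (2 * (β * A k j))
      (fun σ => by
        rw [abs_mul]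
        have h1 := eps_abs_le A β B σ j
        have h2 : |(spinVec n σ k - Real.tanh (β * mloc A (spinVec n σ) k + B)) -
            g (spinVec n σ)| ≤ β * A k j := by
          have heq : (spinVec n σ k - Real.tanh (β * mloc A (spinVec n σ) k + B)) -
              g (spinVec n σ) =
              Real.tanh (β * (mloc A (spinVec n σ) k - A k j * spinVec n σ j) + B) -
              Real.tanh (β * mloc A (spinVec n σ) k + B) := by
            rw [hgdef]; ring
          rw [heq]
          calc |Real.tanh (β * (mloc A (spinVec n σ) k - A k j * spinVec n σ j) + B) -
              Real.tanh (β * mloc A (spinVec n σ) k + B)|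
              ≤ |(β * (mloc A (spinVec n σ) k - A k j * spinVec n σ j) + B) -
                (β * mloc A (spinVec n σ) k + B)| := hlip _ _
            _ = β * A k j := by
                rw [show (β * (mloc A (spinVec n σ) k - A k j * spinVec n σ j) + B) -
                    (β * mloc A (spinVec n σ) k + B) = -(β * A k j * spinVec n σ j) by ring,
                  abs_neg, abs_mul, abs_mul, abs_of_nonneg hβ, abs_of_nonneg (hnonneg k j),
                  hxabs σ, mul_one]
        calc |spinVec n σ j - Real.tanh (β * mloc A (spinVec n σ) j + B)| *
            |(spinVec n σ k - Real.tanh (β * mloc A (spinVec n σ) k + B)) - g (spinVec n σ)|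
            ≤ 2 * (β * A k j) :=
              mul_le_mul h1 h2 (abs_nonneg _) (by norm_num))
    calc |∑ σ : Fin n → Bool,
          (spinVec n σ j - Real.tanh (β * mloc A (spinVec n σ) j + B)) *
          ((spinVec n σ k - Real.tanh (β * mloc A (spinVec n σ) k + B)) - g (spinVec n σ)) *
          isingWt A β B (spinVec n σ)|
        ≤ 2 * (β * A k j) * ∑ σ : Fin n → Bool, isingWt A β B (spinVec n σ) := hbound
      _ = (0 + 2 * β * A k j) * ∑ σ : Fin n → Bool, isingWt A β B (spinVec n σ) := by ring

end core3


section core4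
variable {n : ℕ} (A : Matrix (Fin n) (Fin n) ℝ) (β B : ℝ)

lemma F_decomp (x : Fin n → ℝ) :
    ∑ i, (mloc A x i - ∑ j, A i j * Real.tanh (β * mloc A x j + B)) =
      ∑ j, (∑ i, A i j) * (x j - Real.tanh (β * mloc A x j + B)) := by
  have h1 : ∀ i : Fin n, mloc A x i - ∑ j, A i j * Real.tanh (β * mloc A x j + B) =
      ∑ j, A i j * (x j - Real.tanh (β * mloc A x j + B)) := by
    intro i
    unfold mloc
    rw [← Finset.sum_sub_distrib]
    exact Finset.sum_congr rfl fun j _ => by ring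
  rw [Finset.sum_congr rfl fun i _ => h1 i, Finset.sum_comm]
  exact Finset.sum_congr rfl fun j _ => by rw [Finset.sum_mul]

lemma numer_bound (hsymm : A.IsSymm) (hdiag : ∀ i, A i i = 0)
    (hnonneg : ∀ i j, 0 ≤ A i j) (hβ : 0 ≤ β)
    (hlip : ∀ a b : ℝ, |Real.tanh a - Real.tanh b| ≤ |a - b|)
    (γ : ℝ) (hγ : 0 ≤ γ) (hrow : ∀ i, ∑ j, A i j ≤ γ) :
    ∑ σ : Fin n → Bool,
        (∑ i, (mloc A (spinVec n σ) i -
          ∑ j, A i j * Real.tanh (β * mloc A (spinVec n σ) j + B))) ^ 2 *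
          isingWt A β B (spinVec n σ) ≤
      (4 * γ ^ 2 + 2 * β * γ ^ 3) * n * ∑ σ : Fin n → Bool, isingWt A β B (spinVec n σ) := by
  set c : Fin n → ℝ := fun j => ∑ i, A i j with hc
  set E : Fin n → (Fin n → Bool) → ℝ := fun j σ =>
    spinVec n σ j - Real.tanh (β * mloc A (spinVec n σ) j + B) with hE
  set w : (Fin n → Bool) → ℝ := fun σ => isingWt A β B (spinVec n σ) with hw
  set W : ℝ := ∑ σ : Fin n → Bool, w σ with hWdef
  have hW : 0 ≤ W := Finset.sum_nonneg fun σ _ => (isingWt_pos A β B _).le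
  have hc0 : ∀ j, 0 ≤ c j := fun j => Finset.sum_nonneg fun i _ => hnonneg i j
  have hcol : ∀ j, c j ≤ γ := by
    intro j
    have : c j = ∑ i, A j i := Finset.sum_congr rfl fun i _ => by
      rw [← Matrix.IsSymm.apply hsymm j i]
    rw [this]; exact hrow j
  set S : Fin n → Fin n → ℝ := fun j k => ∑ σ : Fin n → Bool, E j σ * E k σ * w σ with hS
  have step1 : ∑ σ : Fin n → Bool,
      (∑ i, (mloc A (spinVec n σ) i -
        ∑ j, A i j * Real.tanh (β * mloc A (spinVec n σ) j + B))) ^ 2 * w σ =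
      ∑ j, ∑ k, c j * c k * S j k := by
    have hσ : ∀ σ : Fin n → Bool,
        (∑ i, (mloc A (spinVec n σ) i -
          ∑ j, A i j * Real.tanh (β * mloc A (spinVec n σ) j + B))) ^ 2 * w σ =
        ∑ j, ∑ k, (c j * c k) * (E j σ * E k σ * w σ) := by
      intro σ
      rw [F_decomp A β B (spinVec n σ), sq, Finset.sum_mul_sum, Finset.sum_mul]
      refine Finset.sum_congr rfl fun j _ => ?_
      rw [Finset.sum_mul]
      exact Finset.sum_congr rfl fun k _ => by ring
    rw [Finset.sum_congr rfl fun σ _ => hσ σ, Finset.sum_comm]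
    refine Finset.sum_congr rfl fun j _ => ?_
    rw [Finset.sum_comm]
    exact Finset.sum_congr rfl fun k _ => by rw [← Finset.mul_sum]
  have hSbnd : ∀ j k, S j k ≤ ((if j = k then (4:ℝ) else 0) + 2 * β * A k j) * W :=
    fun j k => le_trans (le_abs_self _) (cov_bound A β B hsymm hdiag hnonneg hβ hlip j k)
  have step2 : ∑ j, ∑ k, c j * c k * S j k ≤
      ∑ j, ∑ k, ((if j = k then 4 * γ ^ 2 else 0) + 2 * β * γ ^ 2 * A k j) * W := by
    refine Finset.sum_le_sum fun j _ => Finset.sum_le_sum fun k _ => ?_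
    have h1 : c j * c k * S j k ≤ c j * c k * (((if j = k then (4:ℝ) else 0) + 2 * β * A k j) * W) :=
      mul_le_mul_of_nonneg_left (hSbnd j k) (mul_nonneg (hc0 j) (hc0 k))
    refine le_trans h1 ?_
    have hcc : c j * c k ≤ γ ^ 2 := by
      have := mul_le_mul (hcol j) (hcol k) (hc0 k) hγ
      nlinarith
    have hnn : (0:ℝ) ≤ (if j = k then (4:ℝ) else 0) + 2 * β * A k j := by
      have := hnonneg k j
      split <;> nlinarith
    have hfac : (0:ℝ) ≤ ((if j = k then (4:ℝ) else 0) + 2 * β * A k j) * W :=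
      mul_nonneg hnn hW
    calc c j * c k * (((if j = k then (4:ℝ) else 0) + 2 * β * A k j) * W)
        ≤ γ ^ 2 * (((if j = k then (4:ℝ) else 0) + 2 * β * A k j) * W) :=
          mul_le_mul_of_nonneg_right hcc hfac
      _ = ((if j = k then 4 * γ ^ 2 else 0) + 2 * β * γ ^ 2 * A k j) * W := by
          split <;> ring
  have step3 : ∑ j, ∑ k, ((if j = k then 4 * γ ^ 2 else 0) + 2 * β * γ ^ 2 * A k j) * W ≤
      (4 * γ ^ 2 + 2 * β * γ ^ 3) * n * W := by
    have hsum : ∑ j, ∑ k, ((if j = k then 4 * γ ^ 2 else 0) + 2 * β * γ ^ 2 * A k j)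
        ≤ (4 * γ ^ 2 + 2 * β * γ ^ 3) * n := by
      have h1 : ∀ j : Fin n, ∑ k, ((if j = k then 4 * γ ^ 2 else 0) + 2 * β * γ ^ 2 * A k j) =
          4 * γ ^ 2 + 2 * β * γ ^ 2 * ∑ k, A k j := by
        intro j
        rw [Finset.sum_add_distrib, Finset.sum_ite_eq Finset.univ j, Finset.mul_sum]
        simp
      rw [Finset.sum_congr rfl fun j _ => h1 j, Finset.sum_add_distrib]
      have h2 : ∑ j : Fin n, (4 * γ ^ 2) = 4 * γ ^ 2 * n := by
        rw [Finset.sum_const, Finset.card_univ, Fintype.card_fin, nsmul_eq_mul]; ring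
      have h3 : ∑ j : Fin n, (2 * β * γ ^ 2 * ∑ k, A k j) ≤ 2 * β * γ ^ 3 * n := by
        have h4 : ∀ j : Fin n, 2 * β * γ ^ 2 * ∑ k, A k j ≤ 2 * β * γ ^ 2 * γ := by
          intro j
          refine mul_le_mul_of_nonneg_left ?_ (by positivity)
          have : (∑ k, A k j) = ∑ k, A j k := Finset.sum_congr rfl fun k _ => by
            rw [← Matrix.IsSymm.apply hsymm j k]
          rw [this]; exact hrow j
        calc ∑ j : Fin n, (2 * β * γ ^ 2 * ∑ k, A k j) ≤ ∑ j : Fin n, (2 * β * γ ^ 2 * γ) :=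
              Finset.sum_le_sum fun j _ => h4 j
          _ = 2 * β * γ ^ 3 * n := by
              rw [Finset.sum_const, Finset.card_univ, Fintype.card_fin, nsmul_eq_mul]; ring
      rw [h2]
      linarith
    calc ∑ j, ∑ k, ((if j = k then 4 * γ ^ 2 else 0) + 2 * β * γ ^ 2 * A k j) * W
        = (∑ j, ∑ k, ((if j = k then 4 * γ ^ 2 else 0) + 2 * β * γ ^ 2 * A k j)) * W := by
          rw [Finset.sum_mul]
          refine Finset.sum_congr rfl fun j _ => ?_
          rw [Finset.sum_mul]
      _ ≤ (4 * γ ^ 2 + 2 * β * γ ^ 3) * n * W := mul_le_mul_of_nonneg_right hsum hW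
  calc ∑ σ : Fin n → Bool,
      (∑ i, (mloc A (spinVec n σ) i -
        ∑ j, A i j * Real.tanh (β * mloc A (spinVec n σ) j + B))) ^ 2 * w σ
      = ∑ j, ∑ k, c j * c k * S j k := step1
    _ ≤ ∑ j, ∑ k, ((if j = k then 4 * γ ^ 2 else 0) + 2 * β * γ ^ 2 * A k j) * W := step2
    _ ≤ (4 * γ ^ 2 + 2 * β * γ ^ 3) * n * W := step3

end core4

/-- `limsup (1/n) E[(∑ᵢ (mᵢ(X) - ∑ⱼ A(i,j) tanh(β mⱼ(X)+B)))²] < ∞`. -/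
theorem stmt18 (A : (n : ℕ) → Matrix (Fin n) (Fin n) ℝ)
    (hsymm : ∀ n, (A n).IsSymm)
    (hnonneg : ∀ n, ∀ i j : Fin n, 0 ≤ A n i j)
    (hdiag : ∀ n, ∀ i : Fin n, A n i i = 0)
    (hBD : ∃ γ : ℝ, ∀ n, ∀ i : Fin n, (∑ j, A n i j) ≤ γ)
    (hNT : 0 < liminf (fun n : ℕ => (1 / (n : ℝ)) * ∑ i, ∑ j, A n i j) atTop)
    (β B : ℝ) (hβ : 0 < β) (hB : B ≠ 0) :
    IsBoundedUnder (· ≤ ·) atTop (fun n : ℕ => (1 / (n : ℝ)) * isingExp (A n) β B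
      (fun x => (∑ i, (mloc (A n) x i -
        ∑ j, A n i j * Real.tanh (β * mloc (A n) x j + B))) ^ 2)) := by
  obtain ⟨γ₀, hγ₀⟩ := hBD
  set γ : ℝ := max γ₀ 0 with hγdef
  have hγ : 0 ≤ γ := le_max_right _ _
  set K : ℝ := 4 * γ ^ 2 + 2 * β * γ ^ 3 with hK
  have hK0 : 0 ≤ K := by
    have h1 : 0 ≤ γ ^ 2 := sq_nonneg γ
    have h2 : 0 ≤ γ ^ 3 := pow_nonneg hγ 3
    nlinarith
  refine isBoundedUnder_of ⟨K, fun n => ?_⟩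
  by_cases hn : n = 0
  · subst hn
    simp only [Nat.cast_zero, div_zero, one_div, zero_mul]
    norm_num
    exact hK0
  have hn' : (0:ℝ) < n := by
    have : 0 < n := Nat.pos_of_ne_zero hn
    exact_mod_cast this
  have hD : 0 < ∑ σ : Fin n → Bool, isingWt (A n) β B (spinVec n σ) :=
    Finset.sum_pos (fun σ _ => isingWt_pos (A n) β B _) Finset.univ_nonempty
  have hrow : ∀ i : Fin n, ∑ j, A n i j ≤ γ := fun i => le_trans (hγ₀ n i) (le_max_left _ _)
  have hNb := numer_bound (A n) β B (hsymm n) (hdiag n) (hnonneg n) hβ.le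
    (fun a b => tanh_lipschitz a b) γ hγ hrow
  have hE : isingExp (A n) β B
      (fun x => (∑ i, (mloc (A n) x i -
        ∑ j, A n i j * Real.tanh (β * mloc (A n) x j + B))) ^ 2) ≤ K * (n:ℝ) := by
    unfold isingExp
    rw [div_le_iff₀ hD]
    exact hNb
  have hEnn : 0 ≤ isingExp (A n) β B
      (fun x => (∑ i, (mloc (A n) x i -
        ∑ j, A n i j * Real.tanh (β * mloc (A n) x j + B))) ^ 2) := by
    unfold isingExp
    refine div_nonneg (Finset.sum_nonneg fun σ _ => ?_) hD.le
    exact mul_nonneg (sq_nonneg _) (isingWt_pos (A n) β B _).le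
  have h2 := mul_le_mul_of_nonneg_left hE (by positivity : (0:ℝ) ≤ 1 / (n:ℝ))
  have h3 : (1 / (n : ℝ)) * (K * (n:ℝ)) = K := by field_simp
  linarith
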